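/- Let G be a locally compact Hausdorff topological group which is unimodular, let K ≤ G be a compact open subgroup, and let t ∈ G. Let μ_G be a Haar measure on G and μ_K a Haar measure on K. Then for every continuous compactly supported function f : G → ℝ whose support is contained in KtK, one has μ_G(KtK) · ∫_{K×K} f(k₁ t k₂) dμ_K(k₁) dμ_K(k₂) = μ_K(K)² · ∫_G f(g) dμ_G(g). (Equivalently, the constant c(KtK) in the Cartier integration formula satisfies c(KtK) · μ_K(K)² = μ_G(KtK).) -/

import Mathlib

open MeasureTheory Pointwise

/-- A Haar measure on a compact group is right invariant (compact groups are unimodular). -/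
lemma haar_isMulRightInvariant_of_compactSpace
    {H : Type*} [Group H] [TopologicalSpace H] [IsTopologicalGroup H] [CompactSpace H]
    [MeasurableSpace H] [BorelSpace H] (μ : Measure H) [μ.IsHaarMeasure] :
    μ.IsMulRightInvariant := by
  constructor
  intro g
  set ν : Measure H := Measure.map (· * g) μ with hν
  have hνHaar : ν.IsHaarMeasure := by
    rw [hν]; infer_instance
  set r := Measure.haarScalarFactor ν μ with hr
  have hco : ν = r • μ := Measure.isMulInvariant_eq_smul_of_compactSpace ν μ
  have hνuniv : ν Set.univ = μ Set.univ := by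
    rw [hν, Measure.map_apply (measurable_mul_const g) MeasurableSet.univ,
      Set.preimage_univ]
  have hfin : μ Set.univ < ⊤ := IsCompact.measure_lt_top isCompact_univ
  have hpos : 0 < μ Set.univ := isOpen_univ.measure_pos μ Set.univ_nonempty
  have hcm : ν Set.univ = (r : ENNReal) * μ Set.univ := by
    conv_lhs => rw [hco]
    rw [Measure.smul_apply, ENNReal.smul_def, smul_eq_mul]
  have hc1 : (r : ENNReal) * μ Set.univ = 1 * μ Set.univ := by
    rw [← hcm, hνuniv, one_mul]
  have hr1 : (r : ENNReal) = 1 :=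
    (ENNReal.mul_left_inj hpos.ne' hfin.ne).1 hc1
  have hr1' : r = 1 := by exact_mod_cast hr1
  rw [hco, hr1', one_smul]

/-- **The constant in the Cartier integration formula.**
With `G` locally compact Hausdorff unimodular, `K ≤ G` compact open, `t ∈ G`, `μG` a Haar
measure on `G` and `μK` a Haar measure on `K`: for every continuous compactly supported
`f : G → ℝ` supported in `KtK`,
`μG(KtK) * ∫_{K×K} f(k₁ t k₂) dμK dμK = μK(K)² * ∫_G f dμG`.
(Equivalently, the constant `c(KtK)` satisfies `c(KtK) * μK(K)² = μG(KtK)`.) -/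
theorem cartier_double_coset_constant
    {G : Type*} [Group G] [TopologicalSpace G] [IsTopologicalGroup G]
    [LocallyCompactSpace G] [T2Space G] [MeasurableSpace G] [BorelSpace G]
    (μG : Measure G) [μG.IsHaarMeasure] [μG.IsMulRightInvariant]
    (K : Subgroup G) (hKc : IsCompact (K : Set G)) (hKo : IsOpen (K : Set G))
    (μK : Measure K) [μK.IsHaarMeasure]
    (t : G) :
    ∀ f : G → ℝ, Continuous f → HasCompactSupport f →
      tsupport f ⊆ (K : Set G) * {t} * (K : Set G) →
      (μG ((K : Set G) * {t} * (K : Set G))).toReal *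
          (∫ k₁ : K, ∫ k₂ : K, f ((k₁ : G) * t * (k₂ : G)) ∂μK ∂μK) =
        ((μK Set.univ).toReal) ^ 2 * ∫ g, f g ∂μG := by
  intro f hf hfc hfs
  haveI : CompactSpace K := isCompact_iff_compactSpace.mp hKc
  haveI : BorelSpace K := Subtype.borelSpace (K : Set G)
  haveI : μK.IsMulRightInvariant := haar_isMulRightInvariant_of_compactSpace μK
  set S : Set G := (K : Set G) * {t} * (K : Set G) with hS
  have hSo : IsOpen S := hKo.mul_left
  have hSc : IsCompact S := (hKc.mul isCompact_singleton).mul hKc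
  -- the double coset is stable under left/right multiplication by elements of K
  have hmem : ∀ g ∈ S, ∀ a ∈ K, ∀ b ∈ K, a * g * b ∈ S := by
    rintro g hg a ha b hb
    rw [hS, Set.mem_mul] at hg
    obtain ⟨x, hx, b', hb', rfl⟩ := hg
    rw [Set.mem_mul] at hx
    obtain ⟨p, hp, t', ht', rfl⟩ := hx
    rw [Set.mem_singleton_iff] at ht'
    rw [ht']
    have hrw : a * (p * t * b') * b = (a * p) * t * (b' * b) := by group
    rw [hS, hrw]
    exact Set.mul_mem_mul (Set.mul_mem_mul (mul_mem ha hp) rfl) (mul_mem hb' hb)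
  -- f vanishes at k₁ * g * k₂ when g ∉ S
  have hvanish : ∀ g ∉ S, ∀ (k₁ k₂ : K), f ((k₁ : G) * g * (k₂ : G)) = 0 := by
    intro g hg k₁ k₂
    by_contra hne
    have hx : (k₁ : G) * g * (k₂ : G) ∈ S := hfs (subset_tsupport f hne)
    have h2 : ((k₁ : G))⁻¹ * ((k₁ : G) * g * (k₂ : G)) * ((k₂ : G))⁻¹ ∈ S :=
      hmem _ hx _ (inv_mem k₁.2) _ (inv_mem k₂.2)
    have hgeq : ((k₁ : G))⁻¹ * ((k₁ : G) * g * (k₂ : G)) * ((k₂ : G))⁻¹ = g := by group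
    rw [hgeq] at h2
    exact hg h2
  -- a compact set containing all g with f (k₁ g k₂) ≠ 0 for some k₁ k₂ ∈ K
  set T : Set G := (K : Set G) * S * (K : Set G) with hT
  have hTc : IsCompact T := (hKc.mul hSc).mul hKc
  have hvanishT : ∀ g ∉ T, ∀ (k₁ k₂ : K), f ((k₁ : G) * g * (k₂ : G)) = 0 := by
    intro g hg k₁ k₂
    by_contra hne
    have hx : (k₁ : G) * g * (k₂ : G) ∈ S := hfs (subset_tsupport f hne)
    have h2 : ((k₁ : G))⁻¹ * ((k₁ : G) * g * (k₂ : G)) * ((k₂ : G))⁻¹ ∈ T := by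
      rw [hT]
      exact Set.mul_mem_mul (Set.mul_mem_mul (inv_mem k₁.2) hx) (inv_mem k₂.2)
    have hgeq : ((k₁ : G))⁻¹ * ((k₁ : G) * g * (k₂ : G)) * ((k₂ : G))⁻¹ = g := by group
    rw [hgeq] at h2
    exact hg h2
  set c : ℝ := ∫ k₁ : K, ∫ k₂ : K, f ((k₁ : G) * t * (k₂ : G)) ∂μK ∂μK with hc
  -- constancy of the double integral on the double coset
  have key : ∀ g ∈ S, (∫ k₁ : K, ∫ k₂ : K, f ((k₁ : G) * g * (k₂ : G)) ∂μK ∂μK) = c := by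
    rintro g hg
    rw [hS, Set.mem_mul] at hg
    obtain ⟨x, hx, b, hb, rfl⟩ := hg
    rw [Set.mem_mul] at hx
    obtain ⟨a, ha, t', ht', rfl⟩ := hx
    rw [Set.mem_singleton_iff] at ht'
    rw [ht']
    have inner : ∀ k₁ : K,
        (∫ k₂ : K, f ((k₁ : G) * (a * t * b) * (k₂ : G)) ∂μK)
          = ∫ k₂ : K, f ((k₁ : G) * a * t * (k₂ : G)) ∂μK := by
      intro k₁
      have h1 := integral_mul_left_eq_self (μ := μK)
        (fun k : K => f ((k₁ : G) * a * t * (k : G))) ⟨b, hb⟩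
      rw [← h1]
      refine integral_congr_ae (Filter.Eventually.of_forall fun k => ?_)
      show f ((k₁ : G) * (a * t * b) * (k : G))
          = f ((k₁ : G) * a * t * ((⟨b, hb⟩ * k : K) : G))
      congr 1
      push_cast
      group
    calc (∫ k₁ : K, ∫ k₂ : K, f ((k₁ : G) * (a * t * b) * (k₂ : G)) ∂μK ∂μK)
        = ∫ k₁ : K, ∫ k₂ : K, f ((k₁ : G) * a * t * (k₂ : G)) ∂μK ∂μK :=
          integral_congr_ae (Filter.Eventually.of_forall inner)
      _ = c := by
          have h2 := integral_mul_right_eq_self (μ := μK)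
            (fun k : K => ∫ k₂ : K, f ((k : G) * t * (k₂ : G)) ∂μK) ⟨a, ha⟩
          rw [hc, ← h2]
          refine integral_congr_ae (Filter.Eventually.of_forall fun k => ?_)
          refine integral_congr_ae (Filter.Eventually.of_forall fun k₂ => ?_)
          show f ((k : G) * a * t * (k₂ : G)) = f (((k * ⟨a, ha⟩ : K) : G) * t * (k₂ : G))
          congr 1
  -- integrability preliminaries
  obtain ⟨C, hC⟩ := hfc.exists_bound_of_continuous hf
  haveI : IsFiniteMeasure (μG.restrict S) :=
    ⟨by rw [Measure.restrict_apply_univ]; exact hSc.measure_lt_top⟩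
  -- the inner integrand, as a function on G × K for fixed k₁
  have hIntΦ₂ : ∀ k₁ : K,
      Integrable (Function.uncurry fun g (k₂ : K) => f ((k₁ : G) * g * (k₂ : G)))
        ((μG.restrict S).prod μK) := by
    intro k₁
    have contF : Continuous (Function.uncurry fun g (k₂ : K) => f ((k₁ : G) * g * (k₂ : G))) :=
      hf.comp (((continuous_const.mul continuous_fst)).mul
        (continuous_subtype_val.comp continuous_snd))
    have hCS : HasCompactSupport
        (Function.uncurry fun g (k₂ : K) => f ((k₁ : G) * g * (k₂ : G))) := by
      apply HasCompactSupport.intro (hTc.prod isCompact_univ)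
      rintro ⟨g, k₂⟩ hz
      have hg : g ∉ T := by
        intro hgT
        exact hz ⟨hgT, Set.mem_univ _⟩
      exact hvanishT g hg k₁ k₂
    have SM := HasCompactSupport.stronglyMeasurable_of_prod contF hCS
    exact (integrable_const C).mono' SM.aestronglyMeasurable
      (Filter.Eventually.of_forall fun z => hC _)
  -- the function (g, k₁) ↦ ∫ k₂, f (k₁ g k₂) is continuous
  have contΦ₁ : Continuous (Function.uncurry fun g (k₁ : K) =>
      ∫ k₂ : K, f ((k₁ : G) * g * (k₂ : G)) ∂μK) := by
    show Continuous (fun x : G × K => ∫ k₂ : K, f ((x.2 : G) * x.1 * (k₂ : G)) ∂μK)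
    have h := continuousOn_integral_of_compact_support (μ := μK)
      (f := fun (x : G × K) (k₂ : K) => f ((x.2 : G) * x.1 * (k₂ : G)))
      (s := (Set.univ : Set (G × K))) (k := (Set.univ : Set K)) isCompact_univ
      (by
        apply Continuous.continuousOn
        exact hf.comp (((continuous_subtype_val.comp (continuous_snd.comp
          continuous_fst)).mul (continuous_fst.comp continuous_fst)).mul
          (continuous_subtype_val.comp continuous_snd)))
      (fun p x _hp hx => absurd (Set.mem_univ x) hx)
    exact continuousOn_univ.mp h
  have hIntΦ₁ : Integrable (Function.uncurry fun g (k₁ : K) =>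
      ∫ k₂ : K, f ((k₁ : G) * g * (k₂ : G)) ∂μK) ((μG.restrict S).prod μK) := by
    have hCS : HasCompactSupport (Function.uncurry fun g (k₁ : K) =>
        ∫ k₂ : K, f ((k₁ : G) * g * (k₂ : G)) ∂μK) := by
      apply HasCompactSupport.intro (hTc.prod isCompact_univ)
      rintro ⟨g, k₁⟩ hz
      have hg : g ∉ T := by
        intro hgT
        exact hz ⟨hgT, Set.mem_univ _⟩
      show (∫ k₂ : K, f ((k₁ : G) * g * (k₂ : G)) ∂μK) = 0
      calc (∫ k₂ : K, f ((k₁ : G) * g * (k₂ : G)) ∂μK)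
          = ∫ _k₂ : K, (0 : ℝ) ∂μK :=
            integral_congr_ae (Filter.Eventually.of_forall fun k₂ => hvanishT g hg k₁ k₂)
        _ = 0 := integral_zero _ _
    have SM := HasCompactSupport.stronglyMeasurable_of_prod contΦ₁ hCS
    refine (integrable_const ((μK Set.univ).toReal * C)).mono' SM.aestronglyMeasurable
      (Filter.Eventually.of_forall fun z => ?_)
    calc ‖Function.uncurry (fun g (k₁ : K) =>
            ∫ k₂ : K, f ((k₁ : G) * g * (k₂ : G)) ∂μK) z‖
        ≤ ∫ _k₂ : K, C ∂μK :=
          norm_integral_le_of_norm_le (integrable_const C)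
            (Filter.Eventually.of_forall fun k₂ => hC _)
      _ = (μK Set.univ).toReal * C := by rw [integral_const, smul_eq_mul, measureReal_def]
  -- main computation
  calc (μG S).toReal * c
      = ∫ _g in S, c ∂μG := by rw [setIntegral_const, smul_eq_mul, measureReal_def]
    _ = ∫ g in S, (∫ k₁ : K, ∫ k₂ : K, f ((k₁ : G) * g * (k₂ : G)) ∂μK ∂μK) ∂μG :=
        (setIntegral_congr_fun hSo.measurableSet fun g hg => key g hg).symm
    _ = ∫ k₁ : K, ∫ g in S, (∫ k₂ : K, f ((k₁ : G) * g * (k₂ : G)) ∂μK) ∂μG ∂μK :=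
        integral_integral_swap hIntΦ₁
    _ = ∫ k₁ : K, ∫ k₂ : K, ∫ g in S, f ((k₁ : G) * g * (k₂ : G)) ∂μG ∂μK ∂μK :=
        integral_congr_ae (Filter.Eventually.of_forall fun k₁ =>
          integral_integral_swap (hIntΦ₂ k₁))
    _ = ∫ _k₁ : K, ∫ _k₂ : K, ∫ g, f g ∂μG ∂μK ∂μK := by
        refine integral_congr_ae (Filter.Eventually.of_forall fun k₁ => ?_)
        refine integral_congr_ae (Filter.Eventually.of_forall fun k₂ => ?_)
        calc (∫ g in S, f ((k₁ : G) * g * (k₂ : G)) ∂μG)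
            = ∫ g, f ((k₁ : G) * g * (k₂ : G)) ∂μG :=
              setIntegral_eq_integral_of_forall_compl_eq_zero
                (fun g hg => hvanish g hg k₁ k₂)
          _ = ∫ g, f (g * (k₂ : G)) ∂μG :=
              integral_mul_left_eq_self (μ := μG) (fun x => f (x * (k₂ : G))) (k₁ : G)
          _ = ∫ g, f g ∂μG := integral_mul_right_eq_self (μ := μG) f (k₂ : G)
    _ = ((μK Set.univ).toReal) ^ 2 * ∫ g, f g ∂μG := by
        rw [integral_const, integral_const, smul_eq_mul, smul_eq_mul, sq, measureReal_def]
        ring
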